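/- For every instance of the Steiner Path Aggregation Problem on k terminals restricted to trees (i.e., the union of the proposed paths forms a tree after forgetting colors and parallel arcs), there exists an r-arborescence in which every terminal's path to the root switches colors at most ⌈log₂ n⌉ times, where n is the number of vertices. -/

import Mathlib

/-- The number of vertices in the subtree rooted at `v` of the rooted tree
given by the parent function `parent`. -/
noncomputable def subSize {V : Type*} (parent : V → V) (v : V) : ℕ :=
  Set.ncard {u | ∃ k : ℕ, parent^[k] u = v}

namespace SPA17

open Function Set

variable {V : Type*} [Fintype V]

/-- `u` is a descendant of `v`. -/
def desc (parent : V → V) (u v : V) : Prop := ∃ k : ℕ, parent^[k] u = v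

lemma desc_refl (parent : V → V) (v : V) : desc parent v v := ⟨0, rfl⟩

lemma desc_trans {parent : V → V} {a b c : V} (h1 : desc parent a b)
    (h2 : desc parent b c) : desc parent a c := by
  obtain ⟨k1, hk1⟩ := h1
  obtain ⟨k2, hk2⟩ := h2
  exact ⟨k2 + k1, by rw [iterate_add_apply, hk1, hk2]⟩

lemma desc_parent_of {parent : V → V} {u v : V} (h : desc parent u v) :
    desc parent u (parent v) := by
  obtain ⟨k, hk⟩ := h
  exact ⟨k + 1, by rw [iterate_succ_apply', hk]⟩

lemma subSize_pos (parent : V → V) (v : V) : 0 < subSize parent v :=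
  (Set.ncard_pos (Set.toFinite _)).2 ⟨v, desc_refl parent v⟩

lemma subSize_le_card (parent : V → V) (v : V) :
    subSize parent v ≤ Fintype.card V := by
  calc subSize parent v ≤ (Set.univ : Set V).ncard :=
        Set.ncard_le_ncard (subset_univ _) (toFinite _)
  _ = Fintype.card V := by rw [ncard_univ, Nat.card_eq_fintype_card]

lemma subSize_le_parent (parent : V → V) (v : V) :
    subSize parent v ≤ subSize parent (parent v) :=
  Set.ncard_le_ncard (fun _ hu => desc_parent_of hu) (toFinite _)

section Reach

variable {parent : V → V} {r : V}

lemma eq_root_of_periodic (hroot : parent r = r)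
    (hreach : ∀ v : V, ∃ k : ℕ, parent^[k] v = r)
    {v : V} {d : ℕ} (hd : 0 < d) (h : parent^[d] v = v) : v = r := by
  obtain ⟨m, hm⟩ := hreach v
  have hper : ∀ t : ℕ, parent^[d * t] v = v := by
    intro t
    induction t with
    | zero => simp
    | succ t ih => rw [Nat.mul_succ, iterate_add_apply, h, ih]
  have hge : m ≤ d * m := Nat.le_mul_of_pos_left m hd
  have hdm : parent^[d * m] v = r := by
    rw [show d * m = (d * m - m) + m from (Nat.sub_add_cancel hge).symm,
      iterate_add_apply, hm, iterate_fixed hroot]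
  rw [hper m] at hdm
  exact hdm

lemma parent_not_desc (hroot : parent r = r)
    (hreach : ∀ v : V, ∃ k : ℕ, parent^[k] v = r)
    {v : V} (hv : v ≠ r) : ¬ desc parent (parent v) v := by
  rintro ⟨k, hk⟩
  have hper : parent^[k + 1] v = v := by rw [iterate_succ_apply, hk]
  exact hv (eq_root_of_periodic hroot hreach (Nat.succ_pos k) hper)

lemma subSize_lt (hroot : parent r = r)
    (hreach : ∀ v : V, ∃ k : ℕ, parent^[k] v = r)
    {v : V} (hv : v ≠ r) : subSize parent v < subSize parent (parent v) := by
  refine Set.ncard_lt_ncard ?_ (toFinite _)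
  refine (Set.ssubset_iff_of_subset (fun u hu => desc_parent_of hu)).2 ?_
  exact ⟨parent v, desc_refl parent (parent v), parent_not_desc hroot hreach hv⟩

lemma desc_comparable {x y w : V} (hx : desc parent w x) (hy : desc parent w y) :
    desc parent x y ∨ desc parent y x := by
  obtain ⟨k1, h1⟩ := hx
  obtain ⟨k2, h2⟩ := hy
  rcases le_total k1 k2 with h | h
  · exact Or.inl ⟨k2 - k1, by rw [← h1, ← iterate_add_apply, Nat.sub_add_cancel h, h2]⟩
  · exact Or.inr ⟨k1 - k2, by rw [← h2, ← iterate_add_apply, Nat.sub_add_cancel h, h1]⟩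

lemma children_disjoint (hroot : parent r = r)
    (hreach : ∀ v : V, ∃ k : ℕ, parent^[k] v = r)
    {v c1 c2 : V} (hv : v ≠ r) (h1 : parent c1 = v) (h2 : parent c2 = v)
    (hne : c1 ≠ c2) :
    Disjoint {u | desc parent u c1} {u | desc parent u c2} := by
  have key : ∀ a b : V, parent a = v → parent b = v → a ≠ b → ¬ desc parent a b := by
    rintro a b ha hb hab ⟨d, hd⟩
    have hd0 : d ≠ 0 := by
      rintro rfl
      exact hab hd
    have hper : parent^[d] v = v := by
      calc parent^[d] v = parent^[d] (parent a) := by rw [ha]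
      _ = parent^[d + 1] a := (iterate_succ_apply parent d a).symm
      _ = parent (parent^[d] a) := iterate_succ_apply' parent d a
      _ = parent b := by rw [hd]
      _ = v := hb
    exact hv (eq_root_of_periodic hroot hreach (Nat.pos_of_ne_zero hd0) hper)
  rw [Set.disjoint_left]
  rintro w hw1 hw2
  rcases desc_comparable hw1 hw2 with h | h
  · exact key c1 c2 h1 h2 hne h
  · exact key c2 c1 h2 h1 (Ne.symm hne) h

end Reach

/-- Children of `v` (other than `v`) whose subtree contains a terminal. -/
def childSet (parent : V → V) (R : Set V) (v : V) : Set V :=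
  {c | parent c = v ∧ c ≠ v ∧ ∃ u ∈ R, desc parent u c}

/-- Step to the heavy child with a terminal, if any; otherwise stay put. -/
noncomputable def step (parent : V → V) (R : Set V) (v : V) : V :=
  haveI := Classical.propDecidable
  if h : ∃ c, c ∈ childSet parent R v ∧
      ∀ c' ∈ childSet parent R v, subSize parent c' ≤ subSize parent c
  then h.choose else v

section Step

variable {parent : V → V} {R : Set V} {r : V}

lemma step_spec {v : V} (hne : (childSet parent R v).Nonempty) :
    step parent R v ∈ childSet parent R v ∧
      ∀ c' ∈ childSet parent R v,
        subSize parent c' ≤ subSize parent (step parent R v) := by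
  have hex : ∃ c, c ∈ childSet parent R v ∧
      ∀ c' ∈ childSet parent R v, subSize parent c' ≤ subSize parent c := by
    obtain ⟨a, ha, hmax⟩ :=
      Set.Finite.exists_maximalFor (subSize parent) _ (toFinite _) hne
    refine ⟨a, ha, fun c' hc' => ?_⟩
    by_contra h
    push_neg at h
    exact absurd (hmax hc' h.le) (by omega)
  rw [step, dif_pos hex]
  exact hex.choose_spec

lemma step_eq_self {v : V} (h : ¬ (childSet parent R v).Nonempty) :
    step parent R v = v := by
  rw [step, dif_neg]
  rintro ⟨c, hc, -⟩
  exact h ⟨c, hc⟩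

lemma step_cases (v : V) :
    step parent R v = v ∨ (childSet parent R v).Nonempty := by
  by_cases h : (childSet parent R v).Nonempty
  · exact Or.inr h
  · exact Or.inl (step_eq_self h)

lemma desc_step (v : V) : desc parent (step parent R v) v := by
  rcases step_cases (parent := parent) (R := R) v with h | h
  · rw [h]; exact desc_refl parent v
  · exact ⟨1, by simpa using (step_spec h).1.1⟩

lemma desc_step_iterate (n : ℕ) (v : V) :
    desc parent ((step parent R)^[n] v) v := by
  induction n generalizing v with
  | zero => exact desc_refl parent v
  | succ n ih =>
    rw [iterate_succ_apply]
    exact desc_trans (ih (step parent R v)) (desc_step v)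

lemma subSize_step_lt (hroot : parent r = r)
    (hreach : ∀ v : V, ∃ k : ℕ, parent^[k] v = r)
    {v : V} (h : step parent R v ≠ v) :
    subSize parent (step parent R v) < subSize parent v := by
  rcases step_cases (parent := parent) (R := R) v with h' | h'
  · exact absurd h' h
  · obtain ⟨⟨hp, hcv, -⟩, -⟩ := step_spec h'
    have hsr : step parent R v ≠ r := by
      rintro hsr
      rw [hsr] at hp hcv
      exact hcv (hroot.symm.trans hp)
    have := subSize_lt hroot hreach hsr (parent := parent)
    rwa [hp] at this

lemma step_fixed_of_le (hroot : parent r = r)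
    (hreach : ∀ v : V, ∃ k : ℕ, parent^[k] v = r) :
    ∀ n (v : V), subSize parent v ≤ n →
      step parent R ((step parent R)^[n] v) = (step parent R)^[n] v := by
  intro n
  induction n with
  | zero => intro v hv; exact absurd hv (by have := subSize_pos parent v; omega)
  | succ n ih =>
    intro v hv
    by_cases hs : step parent R v = v
    · rw [iterate_fixed hs, hs]
    · rw [iterate_succ_apply]
      exact ih _ (by have := subSize_step_lt hroot hreach hs; omega)

lemma hasterm_step {v : V} (h : ∃ u ∈ R, desc parent u v) :
    ∃ u ∈ R, desc parent u (step parent R v) := by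
  by_cases hne : (childSet parent R v).Nonempty
  · exact (step_spec hne).1.2.2
  · rw [step_eq_self hne]; exact h

lemma hasterm_step_iterate (n : ℕ) (v : V) (h : ∃ u ∈ R, desc parent u v) :
    ∃ u ∈ R, desc parent u ((step parent R)^[n] v) := by
  induction n generalizing v with
  | zero => exact h
  | succ n ih =>
    rw [iterate_succ_apply]
    exact ih _ (hasterm_step h)

lemma exists_child {u v : V} (h : desc parent u v) (hne : u ≠ v) :
    ∃ c, parent c = v ∧ c ≠ v ∧ desc parent u c := by
  haveI : DecidablePred fun k : ℕ => parent^[k] u = v := fun _ => Classical.dec _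
  have hP : ∃ k : ℕ, parent^[k] u = v := h
  have hk0 : parent^[Nat.find hP] u = v := Nat.find_spec hP
  have h0 : Nat.find hP ≠ 0 := by
    intro h'
    rw [h'] at hk0
    exact hne hk0
  refine ⟨parent^[Nat.find hP - 1] u, ?_, ?_, ⟨Nat.find hP - 1, rfl⟩⟩
  · rw [← iterate_succ_apply' parent]
    simp only [Nat.sub_one, Nat.succ_pred_eq_of_pos (Nat.pos_of_ne_zero h0)]
    exact hk0
  · intro hc
    exact Nat.find_min hP (Nat.sub_lt (Nat.pos_of_ne_zero h0) one_pos) hc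

lemma terminal_of_fixed {v : V} (hfix : step parent R v = v)
    (hterm : ∃ u ∈ R, desc parent u v) : v ∈ R := by
  obtain ⟨u, hu, hd⟩ := hterm
  by_cases huv : u = v
  · exact huv ▸ hu
  · obtain ⟨c, hc1, hc2, hc3⟩ := exists_child hd huv
    have hcs : (childSet parent R v).Nonempty := ⟨c, hc1, hc2, u, hu, hc3⟩
    exact absurd hfix (step_spec hcs).1.2.1

/-- The key doubling step: if the chosen terminals at a child `c` and its parent
`v ≠ r` disagree, then the subtree at `v` is at least twice that at `c`. -/
lemma key_step (hroot : parent r = r)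
    (hreach : ∀ v : V, ∃ k : ℕ, parent^[k] v = r)
    {v c : V} (hv : v ≠ r) (hc : parent c = v) (hcv : c ≠ v)
    (hterm : ∃ u ∈ R, desc parent u c)
    (hne : (step parent R)^[Fintype.card V] v ≠ (step parent R)^[Fintype.card V] c) :
    2 * subSize parent c ≤ subSize parent v := by
  have hcr : c ≠ r := by
    rintro rfl
    exact hcv (hroot.symm.trans hc)
  have hclt : subSize parent c < subSize parent v := by
    have := subSize_lt hroot hreach hcr (parent := parent)
    rwa [hc] at this
  have hcmem : c ∈ childSet parent R v := ⟨hc, hcv, hterm⟩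
  obtain ⟨⟨hp, hsv, -⟩, hmax⟩ := step_spec ⟨c, hcmem⟩
  set c' := step parent R v with hc'
  have hN : 0 < Fintype.card V := Fintype.card_pos_iff.2 ⟨v⟩
  by_cases hcc : c' = c
  · exfalso
    apply hne
    have hle : subSize parent c ≤ Fintype.card V - 1 := by
      have := subSize_le_card parent v
      omega
    have e1 : (step parent R)^[Fintype.card V] v
        = (step parent R)^[Fintype.card V - 1] c := by
      conv_lhs => rw [show Fintype.card V = (Fintype.card V - 1) + 1 by omega]
      rw [iterate_succ_apply, ← hc', hcc]
    have e2 : (step parent R)^[Fintype.card V] c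
        = (step parent R)^[Fintype.card V - 1] c := by
      conv_lhs => rw [show Fintype.card V = (Fintype.card V - 1) + 1 by omega]
      rw [iterate_succ_apply']
      exact step_fixed_of_le hroot hreach _ c hle
    rw [e1, e2]
  · have hdisj := children_disjoint hroot hreach hv hp hc hcc
    have hunion : {u | desc parent u c'} ∪ {u | desc parent u c} ⊆
        {u | desc parent u v} := by
      rintro w (hw | hw)
      · have := desc_parent_of hw; rwa [hp] at this
      · have := desc_parent_of hw; rwa [hc] at this
    have hcard : subSize parent c' + subSize parent c ≤ subSize parent v := by
      have := Set.ncard_union_eq hdisj (toFinite _) (toFinite _)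
      have hle := Set.ncard_le_ncard hunion (toFinite _)
      rw [this] at hle
      exact hle
    have := hmax c hcmem
    omega

end Step

end SPA17

/-- Steiner Path Aggregation on trees: the underlying graph is a tree oriented
toward the root `r` (given by `parent`), each terminal `u ∈ R` proposes its
tree path to `r`, all of whose arcs carry the color `col u`.  There is a
choice `ℓ`, for each tree edge (identified with its child endpoint `v`) used
by some terminal, of a terminal whose proposed path contains that edge, such
that every terminal's resulting path to the root switches colors at most
`⌈log₂ n⌉` times. -/
theorem stmt17 {V C : Type*} [Fintype V] (r : V) (parent : V → V)
    (hroot : parent r = r) (hreach : ∀ v : V, ∃ k : ℕ, parent^[k] v = r)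
    (R : Set V) (hrR : r ∉ R) (col : V → C) :
    ∃ ℓ : V → V,
      (∀ v : V, v ≠ r → (∃ u ∈ R, ∃ k : ℕ, parent^[k] u = v) →
        ℓ v ∈ R ∧ ∃ k : ℕ, parent^[k] (ℓ v) = v) ∧
      ∀ u ∈ R,
        {i : ℕ | parent^[i + 1] u ≠ r ∧
            col (ℓ (parent^[i] u)) ≠ col (ℓ (parent^[i + 1] u))}.ncard
          ≤ Nat.clog 2 (Fintype.card V) := by
  classical
  open SPA17 Function in
  refine ⟨fun v => (SPA17.step parent R)^[Fintype.card V] v, ?_, ?_⟩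
  · intro v hv hterm
    dsimp only
    have hterm' : ∃ u ∈ R, desc parent u v := hterm
    have hfix : SPA17.step parent R ((SPA17.step parent R)^[Fintype.card V] v)
        = (SPA17.step parent R)^[Fintype.card V] v :=
      step_fixed_of_le hroot hreach _ v (subSize_le_card parent v)
    exact ⟨terminal_of_fixed hfix
        (hasterm_step_iterate (Fintype.card V) v hterm'),
      desc_step_iterate (Fintype.card V) v⟩
  · intro u hu
    dsimp only
    set ℓ : V → V := fun v => (SPA17.step parent R)^[Fintype.card V] v with hℓ
    set A : Set ℕ := {i : ℕ | parent^[i + 1] u ≠ r ∧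
        col (ℓ (parent^[i] u)) ≠ col (ℓ (parent^[i + 1] u))} with hA
    have claim : ∀ i : ℕ, 2 ^ (A ∩ Set.Iio i).ncard ≤ subSize parent (parent^[i] u) := by
      intro i
      induction i with
      | zero =>
        have h0 : A ∩ Set.Iio 0 = ∅ := by ext j; simp
        rw [h0, Set.ncard_empty, pow_zero]
        exact subSize_pos parent u
      | succ i ih =>
        have hfin : (A ∩ Set.Iio i).Finite :=
          Set.Finite.subset (Set.finite_Iio i) Set.inter_subset_right
        by_cases hiA : i ∈ A
        · obtain ⟨hner, hcol⟩ := hiA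
          have hset : A ∩ Set.Iio (i + 1) = insert i (A ∩ Set.Iio i) := by
            ext j
            simp only [Set.mem_inter_iff, Set.mem_Iio, Set.mem_insert_iff]
            constructor
            · rintro ⟨hjA, hj⟩
              rcases (by omega : j = i ∨ j < i) with h | h
              · exact Or.inl h
              · exact Or.inr ⟨hjA, h⟩
            · rintro (rfl | ⟨hjA, hj⟩)
              · exact ⟨⟨hner, hcol⟩, by omega⟩
              · exact ⟨hjA, by omega⟩
          have hcard : (A ∩ Set.Iio (i + 1)).ncard = (A ∩ Set.Iio i).ncard + 1 := by
            rw [hset, Set.ncard_insert_of_notMem (by simp) hfin]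
          have hcsucc : parent (parent^[i] u) = parent^[i + 1] u :=
            (iterate_succ_apply' parent i u).symm
          have hcv : parent^[i] u ≠ parent^[i + 1] u := by
            intro h
            have hper : parent^[1] (parent^[i] u) = parent^[i] u := by
              simpa using (hcsucc.trans h.symm)
            have := eq_root_of_periodic hroot hreach one_pos hper
            rw [this] at hcsucc
            exact hner (hcsucc.symm.trans hroot)
          have hkey := key_step hroot hreach hner hcsucc hcv
            ⟨u, hu, ⟨i, rfl⟩⟩ (fun h => hcol (congrArg col h.symm))
          calc 2 ^ (A ∩ Set.Iio (i + 1)).ncard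
              = 2 * 2 ^ (A ∩ Set.Iio i).ncard := by rw [hcard]; ring
          _ ≤ 2 * subSize parent (parent^[i] u) := by omega
          _ ≤ subSize parent (parent^[i + 1] u) := hkey
        · have hset : A ∩ Set.Iio (i + 1) = A ∩ Set.Iio i := by
            ext j
            simp only [Set.mem_inter_iff, Set.mem_Iio]
            constructor
            · rintro ⟨hjA, hj⟩
              rcases (by omega : j = i ∨ j < i) with h | h
              · exact absurd (h ▸ hjA) hiA
              · exact ⟨hjA, h⟩
            · rintro ⟨hjA, hj⟩
              exact ⟨hjA, by omega⟩
          rw [hset]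
          refine le_trans ih ?_
          have h := subSize_le_parent parent (parent^[i] u)
          rwa [← iterate_succ_apply' parent i u] at h
    obtain ⟨m, hm⟩ := hreach u
    have hAm : A ∩ Set.Iio m = A := by
      ext j
      simp only [Set.mem_inter_iff, Set.mem_Iio]
      refine ⟨fun h => h.1, fun hj => ⟨hj, ?_⟩⟩
      by_contra h
      push_neg at h
      apply hj.1
      rw [show j + 1 = (j + 1 - m) + m by omega, iterate_add_apply, hm,
        iterate_fixed hroot]
    have hpow : 2 ^ A.ncard ≤ Fintype.card V := by
      have := claim m
      rw [hAm, hm] at this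
      exact le_trans this (subSize_le_card parent r)
    have h2 : Fintype.card V ≤ 2 ^ Nat.clog 2 (Fintype.card V) :=
      Nat.le_pow_clog one_lt_two _
    exact (Nat.pow_le_pow_iff_right one_lt_two).1 (le_trans hpow h2)
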